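/- Let d ≥ 1 and B = (d² + 3d)/2. There exist a finite set S ⊂ S^{d−1} with |S| = B and ε > 0 such that S is shattered by the class of sets { x ∈ ℝ^d : b₁x₁² + ⋯ + b_d x_d² + b_{d+1}x₁x₂ + ⋯ + b_{B−d}x_{d−1}x_d + b_{B−d+1}x₁ + ⋯ + b_B x_d − 1 < 0 } over all b ∈ ℝ^B with ‖b − a‖_∞ < ε, where a ∈ ℝ^B has its first d components equal to 1 and all other components equal to 0; moreover every quadratic form x ↦ b₁x₁² + ⋯ + b_d x_d² + b_{d+1}x₁x₂ + ⋯ + b_{B−d}x_{d−1}x_d with ‖b − a‖_∞ < ε is positive definite, so each such set is a d-dimensional ellipsoid. -/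

import Mathlib

/-- Index type for the coordinates of `ℝ^B`, `B = (d² + 3d)/2`: one coordinate
for each square `xᵢ²`, one for each product `xᵢxⱼ` (`i < j`), and one for each
linear term `xᵢ`. -/
abbrev QIdx (d : ℕ) : Type :=
  Fin d ⊕ ({p : Fin d × Fin d // p.1 < p.2} ⊕ Fin d)

/-- The map `φ : ℝ^d → ℝ^B` sending `x` to
`(x₁², …, x_d², x₁x₂, …, x_{d-1}x_d, x₁, …, x_d)`. -/
def phi {d : ℕ} (x : Fin d → ℝ) : QIdx d → ℝ :=
  Sum.elim (fun i => x i ^ 2)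
    (Sum.elim (fun p => x p.1.1 * x p.1.2) (fun i => x i))

/-- The quadratic form `q_a(x) = Σᵢ a_i xᵢ² + Σ_{i<j} a_{ij} xᵢxⱼ` determined by
the coefficient vector `a ∈ ℝ^B`. -/
def qform {d : ℕ} (a : QIdx d → ℝ) (x : Fin d → ℝ) : ℝ :=
  ∑ i, a (Sum.inl i) * x i ^ 2 +
    ∑ p : {p : Fin d × Fin d // p.1 < p.2}, a (Sum.inr (Sum.inl p)) * (x p.1.1 * x p.1.2)

/-- The quadratic polynomial `p_a(x) = q_a(x) + Σᵢ b_i xᵢ` determined by `a`. -/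
def pform {d : ℕ} (a : QIdx d → ℝ) (x : Fin d → ℝ) : ℝ :=
  qform a x + ∑ i, a (Sum.inr (Sum.inr i)) * x i

open Matrix

/-- A class `C` of subsets of `α` shatters a set `X` if every subset of `X`
is cut out of `X` by some member of `C`. -/
def Shatters {α : Type*} (C : Set (Set α)) (X : Set α) : Prop :=
  ∀ Y ⊆ X, ∃ B ∈ C, Y = X ∩ B

/-- A `d`-dimensional ellipsoid: `{x ∈ ℝ^d : (x-μ)ᵀ A (x-μ) < 1}` for a center
`μ ∈ ℝ^d` and a (symmetric) positive definite matrix `A`. -/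
def IsEllipsoid {d : ℕ} (E : Set (Fin d → ℝ)) : Prop :=
  ∃ (μ : Fin d → ℝ) (A : Matrix (Fin d) (Fin d) ℝ), A.PosDef ∧
    E = {x | (x - μ) ⬝ᵥ A.mulVec (x - μ) < 1}

/-- The coefficient vector `a ∈ ℝ^B` whose first `d` components (those of the
squares `xᵢ²`) are `1` and whose remaining components are `0`. -/
def aZero (d : ℕ) : QIdx d → ℝ := Sum.elim (fun _ => 1) (fun _ => 0)

section Aux

open Matrix

lemma r_pos : (0:ℝ) < (Real.sqrt 2)⁻¹ := by positivity

lemma r_lt_one : (Real.sqrt 2)⁻¹ < 1 := by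
  rw [inv_lt_one_iff₀]
  right
  nlinarith [Real.sq_sqrt (by norm_num : (0:ℝ) ≤ 2), Real.sqrt_nonneg 2]

lemma r_sq : ((Real.sqrt 2)⁻¹) ^ 2 = 1/2 := by
  rw [inv_pow, Real.sq_sqrt (by norm_num : (0:ℝ) ≤ 2)]; norm_num

lemma pform_eq_dot {d : ℕ} (a : QIdx d → ℝ) (x : Fin d → ℝ) :
    pform a x = ∑ m, a m * phi x m := by
  rw [Fintype.sum_sum_type, Fintype.sum_sum_type]
  simp [pform, qform, phi, add_assoc]

lemma pform_aZero {d : ℕ} (x : Fin d → ℝ) : pform (aZero d) x = ∑ i, x i ^ 2 := by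
  simp [pform, qform, aZero]

/-- the points -/
noncomputable def pt {d : ℕ} : QIdx d → (Fin d → ℝ) :=
  Sum.elim (fun i l => if l = i then (1:ℝ) else 0)
    (Sum.elim (fun p l => if l = p.1.1 ∨ l = p.1.2 then (Real.sqrt 2)⁻¹ else 0)
      (fun i l => if l = i then (-1:ℝ) else 0))

lemma pt_sphere {d : ℕ} (k : QIdx d) : ∑ i, (pt k i) ^ 2 = 1 := by
  rcases k with i | k
  · simp [pt, apply_ite (· ^ 2)]
  rcases k with p | i
  · have hne : p.1.1 ≠ p.1.2 := ne_of_lt p.2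
    have : ∀ l, (pt (Sum.inr (Sum.inl p) : QIdx d) l) ^ 2
        = (if l = p.1.1 then ((Real.sqrt 2)⁻¹)^2 else 0) + (if l = p.1.2 then ((Real.sqrt 2)⁻¹)^2 else 0) := by
      intro l
      simp only [pt, Sum.elim_inr, Sum.elim_inl]
      by_cases h1 : l = p.1.1 <;> by_cases h2 : l = p.1.2 <;> simp_all
    rw [Finset.sum_congr rfl (fun l _ => this l), Finset.sum_add_distrib]
    simp [r_sq]
    norm_num
  · simp [pt, apply_ite (· ^ 2)]

set_option maxHeartbeats 1000000 in
lemma pt_injective {d : ℕ} : Function.Injective (pt (d := d)) := by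
  have hr0 := r_pos
  have hr1 := r_lt_one
  intro k k' h
  rcases k with i | p | i <;> rcases k' with i' | p' | i'
  · by_contra hne
    have := congrFun h i
    simp only [pt, Sum.elim_inl, if_pos rfl] at this
    have hii : i ≠ i' := fun hq => hne (by rw [hq])
    rw [if_neg hii] at this; norm_num at this
  · have h1 := congrFun h p'.1.1
    simp only [pt, Sum.elim_inl, Sum.elim_inr, true_or, if_true] at h1
    by_cases hc : p'.1.1 = i <;> simp [hc] at h1 <;> nlinarith [Real.sqrt_nonneg 2, Real.sq_sqrt (by norm_num : (0:ℝ) ≤ 2)]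
  · have h1 := congrFun h i
    simp only [pt, Sum.elim_inl, Sum.elim_inr, if_pos rfl] at h1
    by_cases hc : i = i' <;> simp [hc] at h1 <;> nlinarith [Real.sqrt_nonneg 2, Real.sq_sqrt (by norm_num : (0:ℝ) ≤ 2)]
  · have h1 := congrFun h p.1.1
    simp only [pt, Sum.elim_inl, Sum.elim_inr, true_or, if_true] at h1
    by_cases hc : p.1.1 = i' <;> simp [hc] at h1 <;> nlinarith [Real.sqrt_nonneg 2, Real.sq_sqrt (by norm_num : (0:ℝ) ≤ 2)]
  · have key : ∀ (q q' : {p : Fin d × Fin d // p.1 < p.2}),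
        pt (Sum.inr (Sum.inl q) : QIdx d) = pt (Sum.inr (Sum.inl q')) →
        (q.1.1 = q'.1.1 ∨ q.1.1 = q'.1.2) := by
      intro q q' hqq
      have h1 := congrFun hqq q.1.1
      simp only [pt, Sum.elim_inr, Sum.elim_inl, true_or, if_true] at h1
      by_cases hc : q.1.1 = q'.1.1 ∨ q.1.1 = q'.1.2
      · exact hc
      · rw [if_neg hc] at h1
        nlinarith [Real.sqrt_nonneg 2, Real.sq_sqrt (by norm_num : (0:ℝ) ≤ 2)]
    have key2 : ∀ (q q' : {p : Fin d × Fin d // p.1 < p.2}),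
        pt (Sum.inr (Sum.inl q) : QIdx d) = pt (Sum.inr (Sum.inl q')) →
        (q.1.2 = q'.1.1 ∨ q.1.2 = q'.1.2) := by
      intro q q' hqq
      have h1 := congrFun hqq q.1.2
      simp only [pt, Sum.elim_inr, Sum.elim_inl, or_true, if_true] at h1
      by_cases hc : q.1.2 = q'.1.1 ∨ q.1.2 = q'.1.2
      · exact hc
      · rw [if_neg hc] at h1
        nlinarith [Real.sqrt_nonneg 2, Real.sq_sqrt (by norm_num : (0:ℝ) ≤ 2)]
    have k1 := key p p' h
    have k2 := key2 p p' h
    have hpN : (p.1.1 : ℕ) < (p.1.2 : ℕ) := p.2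
    have hp'N : (p'.1.1 : ℕ) < (p'.1.2 : ℕ) := p'.2
    have K1 : (p.1.1 : ℕ) = p'.1.1 ∨ (p.1.1 : ℕ) = p'.1.2 :=
      k1.imp (congrArg Fin.val) (congrArg Fin.val)
    have K2 : (p.1.2 : ℕ) = p'.1.1 ∨ (p.1.2 : ℕ) = p'.1.2 :=
      k2.imp (congrArg Fin.val) (congrArg Fin.val)
    suffices hpp : p = p' by rw [hpp]
    apply Subtype.ext
    apply Prod.ext_iff.mpr
    constructor <;> apply Fin.ext <;> omega
  · have h1 := congrFun h p.1.1
    simp only [pt, Sum.elim_inr, Sum.elim_inl, true_or, if_true] at h1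
    by_cases hc : p.1.1 = i' <;> simp [hc] at h1 <;> nlinarith [Real.sqrt_nonneg 2, Real.sq_sqrt (by norm_num : (0:ℝ) ≤ 2)]
  · have h1 := congrFun h i
    simp only [pt, Sum.elim_inl, Sum.elim_inr, if_pos rfl] at h1
    by_cases hc : i = i' <;> simp [hc] at h1 <;> nlinarith [Real.sqrt_nonneg 2, Real.sq_sqrt (by norm_num : (0:ℝ) ≤ 2)]
  · have h1 := congrFun h p'.1.1
    simp only [pt, Sum.elim_inr, Sum.elim_inl, true_or, if_true] at h1
    by_cases hc : p'.1.1 = i <;> simp [hc] at h1 <;> nlinarith [Real.sqrt_nonneg 2, Real.sq_sqrt (by norm_num : (0:ℝ) ≤ 2)]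
  · by_contra hne
    have := congrFun h i
    simp only [pt, Sum.elim_inr, if_pos rfl] at this
    have hii : i ≠ i' := fun hq => hne (by rw [hq])
    rw [if_neg hii] at this; norm_num at this

lemma card_pairs (d : ℕ) : Fintype.card {p : Fin d × Fin d // p.1 < p.2} = d * (d-1) / 2 := by
  have e : {p : Fin d × Fin d // p.1 < p.2} ≃ Σ j : Fin d, Fin j.1 :=
    { toFun := fun p => ⟨p.1.2, ⟨p.1.1.1, p.2⟩⟩
      invFun := fun q => ⟨(⟨q.2.1, q.2.2.trans q.1.2⟩, q.1), q.2.2⟩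
      left_inv := fun p => by ext <;> rfl
      right_inv := fun q => by ext <;> rfl }
  rw [Fintype.card_congr e, Fintype.card_sigma]
  simp only [Fintype.card_fin]
  rw [show (∑ x : Fin d, (x:ℕ)) = ∑ i ∈ Finset.range d, i from Fin.sum_univ_eq_sum_range (fun i => i) d, Finset.sum_range_id]

set_option maxHeartbeats 1000000 in
/-- explicit solution of dot-product equations -/
lemma exists_dual {d : ℕ} (t : QIdx d → ℝ) :
    ∃ c : QIdx d → ℝ, ∀ k, (∑ m, c m * phi (pt k) m) = t k := by
  set s : Fin d → ℝ := fun i => (t (Sum.inl i) + t (Sum.inr (Sum.inr i))) / 2 with hs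
  set v : Fin d → ℝ := fun i => (t (Sum.inl i) - t (Sum.inr (Sum.inr i))) / 2 with hv
  set u : {p : Fin d × Fin d // p.1 < p.2} → ℝ := fun p =>
    2 * t (Sum.inr (Sum.inl p)) - s p.1.1 - s p.1.2 - Real.sqrt 2 * (v p.1.1 + v p.1.2) with hu
  refine ⟨Sum.elim s (Sum.elim u v), fun k => ?_⟩
  have hsq : Real.sqrt 2 * Real.sqrt 2 = 2 := Real.mul_self_sqrt (by norm_num)
  have hs0 : Real.sqrt 2 ≠ 0 := by positivity
  have hrsq : ((Real.sqrt 2)⁻¹)^2 = 1/2 := by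
    rw [inv_pow, sq, hsq]; norm_num
  have hr : (Real.sqrt 2)⁻¹ = Real.sqrt 2 / 2 := by
    field_simp
    rw [sq, hsq]
  rw [Fintype.sum_sum_type, Fintype.sum_sum_type]
  rcases k with i | p | i
  · have h1 : (∑ l, Sum.elim s (Sum.elim u v) (Sum.inl l) * phi (pt (Sum.inl i : QIdx d)) (Sum.inl l)) = s i := by
      simp [phi, pt, apply_ite (· ^ 2), mul_ite]
    have h2 : (∑ p' : {p : Fin d × Fin d // p.1 < p.2},
        Sum.elim s (Sum.elim u v) (Sum.inr (Sum.inl p')) * phi (pt (Sum.inl i : QIdx d)) (Sum.inr (Sum.inl p'))) = 0 := by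
      apply Finset.sum_eq_zero
      intro p' _
      simp only [phi, pt, Sum.elim_inr, Sum.elim_inl]
      rcases eq_or_ne p'.1.1 i with h | h
      · have : p'.1.2 ≠ i := by
          intro hq; exact absurd (h ▸ hq ▸ p'.2) (lt_irrefl _)
        simp [this]
      · simp [h]
    have h3 : (∑ l, Sum.elim s (Sum.elim u v) (Sum.inr (Sum.inr l)) * phi (pt (Sum.inl i : QIdx d)) (Sum.inr (Sum.inr l))) = v i := by
      simp [phi, pt, mul_ite]
    rw [h1, h2, h3, hs, hv]; ring
  · have hlt := p.2
    have hne12 : p.1.1 ≠ p.1.2 := ne_of_lt hlt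
    have h1 : (∑ l, Sum.elim s (Sum.elim u v) (Sum.inl l) * phi (pt (Sum.inr (Sum.inl p) : QIdx d)) (Sum.inl l))
        = (s p.1.1 + s p.1.2) / 2 := by
      have : ∀ l, s l * phi (pt (Sum.inr (Sum.inl p) : QIdx d)) (Sum.inl l)
          = (if l = p.1.1 then s l / 2 else 0) + (if l = p.1.2 then s l / 2 else 0) := by
        intro l
        simp only [phi, pt, Sum.elim_inr, Sum.elim_inl]
        by_cases e1 : l = p.1.1 <;> by_cases e2 : l = p.1.2 <;>
          simp_all [hrsq] <;> ring
      simp only [Sum.elim_inl]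
      rw [Finset.sum_congr rfl fun l _ => this l, Finset.sum_add_distrib]
      simp
      ring
    have h2 : (∑ p' : {p : Fin d × Fin d // p.1 < p.2},
        Sum.elim s (Sum.elim u v) (Sum.inr (Sum.inl p')) * phi (pt (Sum.inr (Sum.inl p) : QIdx d)) (Sum.inr (Sum.inl p')))
        = u p / 2 := by
      have : ∀ p' : {p : Fin d × Fin d // p.1 < p.2},
          u p' * phi (pt (Sum.inr (Sum.inl p) : QIdx d)) (Sum.inr (Sum.inl p'))
          = if p' = p then u p / 2 else 0 := by
        intro p'
        have hlt' := p'.2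
        simp only [phi, pt, Sum.elim_inr, Sum.elim_inl]
        by_cases e : p' = p
        · subst e
          simp only [if_pos (Or.inl rfl), if_pos (Or.inr rfl), if_pos rfl]
          field_simp
          simp only [true_or, or_true, if_true, ↓reduceIte, one_div]
          rw [mul_assoc, ← mul_inv, hsq]; ring
        · rw [if_neg e]
          have : ¬(p'.1.1 = p.1.1 ∨ p'.1.1 = p.1.2) ∨ ¬(p'.1.2 = p.1.1 ∨ p'.1.2 = p.1.2) := by
            by_contra hcon
            push_neg at hcon
            obtain ⟨ha, hb⟩ := hcon
            have haN := ha.imp (congrArg Fin.val) (congrArg Fin.val)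
            have hbN := hb.imp (congrArg Fin.val) (congrArg Fin.val)
            have L1 : ((p.1.1 : Fin d) : ℕ) < ((p.1.2 : Fin d) : ℕ) := hlt
            have L2 : ((p'.1.1 : Fin d) : ℕ) < ((p'.1.2 : Fin d) : ℕ) := hlt'
            apply e
            apply Subtype.ext
            apply Prod.ext_iff.mpr
            constructor <;> apply Fin.ext <;> omega
          rcases this with h | h
          · rw [if_neg h]; ring
          · rw [if_neg h]; ring
      simp only [Sum.elim_inr, Sum.elim_inl]
      rw [Finset.sum_congr rfl fun p' _ => this p', Finset.sum_ite_eq' _ p (fun _ => u p / 2)]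
      simp
    have h3 : (∑ l, Sum.elim s (Sum.elim u v) (Sum.inr (Sum.inr l)) * phi (pt (Sum.inr (Sum.inl p) : QIdx d)) (Sum.inr (Sum.inr l)))
        = (v p.1.1 + v p.1.2) * (Real.sqrt 2)⁻¹ := by
      have : ∀ l, v l * phi (pt (Sum.inr (Sum.inl p) : QIdx d)) (Sum.inr (Sum.inr l))
          = (if l = p.1.1 then v l * (Real.sqrt 2)⁻¹ else 0) + (if l = p.1.2 then v l * (Real.sqrt 2)⁻¹ else 0) := by
        intro l
        simp only [phi, pt, Sum.elim_inr, Sum.elim_inl]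
        by_cases e1 : l = p.1.1 <;> by_cases e2 : l = p.1.2 <;> simp_all
      simp only [Sum.elim_inr]
      rw [Finset.sum_congr rfl fun l _ => this l, Finset.sum_add_distrib]
      simp
      ring
    rw [h1, h2, h3, hr]
    simp only [hu]
    ring
  · have h1 : (∑ l, Sum.elim s (Sum.elim u v) (Sum.inl l) * phi (pt (Sum.inr (Sum.inr i) : QIdx d)) (Sum.inl l)) = s i := by
      simp [phi, pt, apply_ite (· ^ 2), mul_ite]
    have h2 : (∑ p' : {p : Fin d × Fin d // p.1 < p.2},
        Sum.elim s (Sum.elim u v) (Sum.inr (Sum.inl p')) * phi (pt (Sum.inr (Sum.inr i) : QIdx d)) (Sum.inr (Sum.inl p'))) = 0 := by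
      apply Finset.sum_eq_zero
      intro p' _
      simp only [phi, pt, Sum.elim_inr, Sum.elim_inl]
      rcases eq_or_ne p'.1.1 i with h | h
      · have : p'.1.2 ≠ i := by
          intro hq; exact absurd (h ▸ hq ▸ p'.2) (lt_irrefl _)
        simp [this]
      · simp [h]
    have h3 : (∑ l, Sum.elim s (Sum.elim u v) (Sum.inr (Sum.inr l)) * phi (pt (Sum.inr (Sum.inr i) : QIdx d)) (Sum.inr (Sum.inr l))) = -v i := by
      simp [phi, pt, mul_ite]
    rw [h1, h2, h3, hs, hv]; ring

noncomputable def mat {d : ℕ} (b : QIdx d → ℝ) : Matrix (Fin d) (Fin d) ℝ :=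
  Matrix.of fun i j =>
    if hij : i < j then b (Sum.inr (Sum.inl ⟨(i, j), hij⟩)) / 2
    else if hji : j < i then b (Sum.inr (Sum.inl ⟨(j, i), hji⟩)) / 2
    else b (Sum.inl i)

lemma mat_symm {d : ℕ} (b : QIdx d → ℝ) : (mat b)ᵀ = mat b := by
  ext i j
  simp only [transpose_apply, mat, Matrix.of_apply]
  rcases lt_trichotomy i j with h | h | h
  · rw [dif_neg (asymm h), dif_pos h, dif_pos h]
  · subst h; rfl
  · rw [dif_pos h, dif_neg (asymm h), dif_pos h]

set_option maxHeartbeats 1000000 in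
lemma mat_quadform {d : ℕ} (b : QIdx d → ℝ) (x : Fin d → ℝ) :
    x ⬝ᵥ (mat b) *ᵥ x = qform b x := by
  have expand : x ⬝ᵥ (mat b) *ᵥ x = ∑ q : Fin d × Fin d, x q.1 * (mat b q.1 q.2 * x q.2) := by
    rw [Fintype.sum_prod_type]
    simp [dotProduct, Matrix.mulVec, Finset.mul_sum]
  rw [expand]
  rw [← Finset.sum_filter_add_sum_filter_not Finset.univ (fun q : Fin d × Fin d => q.1 < q.2)]
  have split2 := Finset.sum_filter_add_sum_filter_not
    (Finset.univ.filter (fun q : Fin d × Fin d => ¬ q.1 < q.2)) (fun q : Fin d × Fin d => q.2 < q.1)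
    (fun q : Fin d × Fin d => x q.1 * (mat b q.1 q.2 * x q.2))
  rw [← split2]
  have hupper : (∑ q ∈ Finset.univ.filter (fun q : Fin d × Fin d => q.1 < q.2),
      x q.1 * (mat b q.1 q.2 * x q.2))
      = (∑ p : {p : Fin d × Fin d // p.1 < p.2}, b (Sum.inr (Sum.inl p)) * (x p.1.1 * x p.1.2)) / 2 := by
    rw [Finset.sum_subtype (p := fun q : Fin d × Fin d => q.1 < q.2)
      (Finset.univ.filter (fun q : Fin d × Fin d => q.1 < q.2))
      (by simp) (fun q => x q.1 * (mat b q.1 q.2 * x q.2)), Finset.sum_div]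
    apply Finset.sum_congr rfl
    intro p _
    have hp := p.2
    simp only [mat, Matrix.of_apply, dif_pos hp]
    ring
  have hlower : (∑ q ∈ (Finset.univ.filter (fun q : Fin d × Fin d => ¬ q.1 < q.2)).filter
        (fun q : Fin d × Fin d => q.2 < q.1), x q.1 * (mat b q.1 q.2 * x q.2))
      = (∑ p : {p : Fin d × Fin d // p.1 < p.2}, b (Sum.inr (Sum.inl p)) * (x p.1.1 * x p.1.2)) / 2 := by
    have hswap : (∑ q ∈ (Finset.univ.filter (fun q : Fin d × Fin d => ¬ q.1 < q.2)).filter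
        (fun q : Fin d × Fin d => q.2 < q.1), x q.1 * (mat b q.1 q.2 * x q.2))
        = ∑ q ∈ Finset.univ.filter (fun q : Fin d × Fin d => q.1 < q.2),
            x q.2 * (mat b q.2 q.1 * x q.1) := by
      refine Finset.sum_nbij' Prod.swap Prod.swap ?_ ?_ ?_ ?_ ?_
      · intro a ha
        simp only [Finset.mem_filter, Finset.mem_univ, true_and, Prod.fst_swap,
          Prod.snd_swap] at ha ⊢
        exact ha.2
      · intro a ha
        simp only [Finset.mem_filter, Finset.mem_univ, true_and, Prod.fst_swap,
          Prod.snd_swap] at ha ⊢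
        exact ⟨lt_asymm ha, ha⟩
      · intro a _; rfl
      · intro a _; rfl
      · intro a _; rfl
    rw [hswap]
    rw [Finset.sum_subtype (p := fun q : Fin d × Fin d => q.1 < q.2)
      (Finset.univ.filter (fun q : Fin d × Fin d => q.1 < q.2))
      (by simp) (fun q => x q.2 * (mat b q.2 q.1 * x q.1)), Finset.sum_div]
    apply Finset.sum_congr rfl
    intro p _
    have hp := p.2
    simp only [mat, Matrix.of_apply, dif_neg (asymm hp), dif_pos hp]
    ring
  have hdiag : (∑ q ∈ (Finset.univ.filter (fun q : Fin d × Fin d => ¬ q.1 < q.2)).filter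
        (fun q : Fin d × Fin d => ¬ q.2 < q.1), x q.1 * (mat b q.1 q.2 * x q.2))
      = ∑ i, b (Sum.inl i) * x i ^ 2 := by
    rw [Finset.filter_filter]
    have hset : (Finset.univ.filter (fun q : Fin d × Fin d => ¬ q.1 < q.2 ∧ ¬ q.2 < q.1))
        = Finset.univ.image (fun i : Fin d => (i, i)) := by
      ext q
      simp only [Finset.mem_filter, Finset.mem_univ, true_and, Finset.mem_image]
      constructor
      · rintro ⟨h1, h2⟩
        have hq : q.1 = q.2 := le_antisymm (not_lt.mp h2) (not_lt.mp h1)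
        exact ⟨q.1, Prod.ext_iff.mpr ⟨rfl, hq⟩⟩
      · rintro ⟨i, rfl⟩
        simp
    rw [hset, Finset.sum_image (by intro a _ b _ h; exact (Prod.ext_iff.mp h).1)]
    apply Finset.sum_congr rfl
    intro i _
    simp only [mat, Matrix.of_apply, dif_neg (lt_irrefl i)]
    ring
  rw [hupper, hlower, hdiag, qform]
  ring

end Aux

section Aux2
open Matrix

lemma abs_mul_le_sum_sq {d : ℕ} (x : Fin d → ℝ) (i j : Fin d) :
    |x i * x j| ≤ ∑ l, x l ^ 2 := by
  have hi : x i ^ 2 ≤ ∑ l, x l ^ 2 :=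
    Finset.single_le_sum (fun l _ => sq_nonneg (x l)) (Finset.mem_univ i)
  have hj : x j ^ 2 ≤ ∑ l, x l ^ 2 :=
    Finset.single_le_sum (fun l _ => sq_nonneg (x l)) (Finset.mem_univ j)
  rw [abs_le]
  constructor <;> nlinarith [sq_nonneg (x i + x j), sq_nonneg (x i - x j)]

lemma qform_pos_of_close {d : ℕ} (b : QIdx d → ℝ)
    (hb : ‖b - aZero d‖ < (2 * ((Fintype.card {p : Fin d × Fin d // p.1 < p.2} : ℝ) + 1))⁻¹)
    (x : Fin d → ℝ) (hx : x ≠ 0) : 0 < qform b x := by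
  set C : ℝ := (Fintype.card {p : Fin d × Fin d // p.1 < p.2} : ℝ) with hC
  have hC0 : 0 ≤ C := Nat.cast_nonneg _
  set N : ℝ := ∑ l, x l ^ 2 with hN
  have hN0 : 0 < N := by
    obtain ⟨i, hi⟩ := Function.ne_iff.mp hx
    apply Finset.sum_pos' (fun l _ => sq_nonneg (x l))
    exact ⟨i, Finset.mem_univ i, pow_two_pos_of_ne_zero hi⟩
  set e : ℝ := ‖b - aZero d‖ with he
  have he0 : 0 ≤ e := norm_nonneg _
  have hcomp : ∀ m, |(b - aZero d) m| ≤ e := by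
    intro m
    have := norm_le_pi_norm (b - aZero d) m
    rwa [Real.norm_eq_abs] at this
  have h1 : ∑ i, b (Sum.inl i) * x i ^ 2 ≥ (1 - e) * N := by
    rw [hN, Finset.mul_sum]
    apply Finset.sum_le_sum
    intro i _
    have : |b (Sum.inl i) - 1| ≤ e := by
      have := hcomp (Sum.inl i)
      simpa [aZero] using this
    have hbi : 1 - e ≤ b (Sum.inl i) := by
      rw [abs_le] at this; linarith [this.1]
    exact mul_le_mul_of_nonneg_right hbi (sq_nonneg (x i))
  have h2 : ∑ p : {p : Fin d × Fin d // p.1 < p.2},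
      b (Sum.inr (Sum.inl p)) * (x p.1.1 * x p.1.2) ≥ -(C * (e * N)) := by
    have : ∀ p : {p : Fin d × Fin d // p.1 < p.2},
        b (Sum.inr (Sum.inl p)) * (x p.1.1 * x p.1.2) ≥ -(e * N) := by
      intro p
      have habs : |b (Sum.inr (Sum.inl p)) * (x p.1.1 * x p.1.2)| ≤ e * N := by
        rw [abs_mul]
        have h1' : |b (Sum.inr (Sum.inl p))| ≤ e := by
          have := hcomp (Sum.inr (Sum.inl p))
          simpa [aZero] using this
        exact mul_le_mul h1' (abs_mul_le_sum_sq x _ _) (abs_nonneg _) he0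
      linarith [neg_abs_le (b (Sum.inr (Sum.inl p)) * (x p.1.1 * x p.1.2)), habs]
    calc ∑ p : {p : Fin d × Fin d // p.1 < p.2},
          b (Sum.inr (Sum.inl p)) * (x p.1.1 * x p.1.2)
        ≥ ∑ _p : {p : Fin d × Fin d // p.1 < p.2}, -(e * N) :=
          Finset.sum_le_sum (fun p _ => this p)
      _ = -(C * (e * N)) := by
          rw [Finset.sum_const, Finset.card_univ]
          push_cast [hC]
          ring
  have hkey : qform b x ≥ (1 - e) * N - C * (e * N) := by
    rw [qform]; linarith [h1, h2]
  have hsmall : e * (1 + C) < 1/2 := by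
    have h2C : 0 < 2 * (C + 1) := by linarith
    have hble : e < (2 * (C + 1))⁻¹ := hb
    have hprod : e * (2 * (C + 1)) < 1 := by
      calc e * (2 * (C + 1)) < (2 * (C + 1))⁻¹ * (2 * (C + 1)) :=
            mul_lt_mul_of_pos_right hble h2C
        _ = 1 := inv_mul_cancel₀ (ne_of_gt h2C)
    nlinarith
  nlinarith [hkey, hsmall, hN0]

end Aux2

section Aux3
open Matrix

lemma star_vec_eq {d : ℕ} (x : Fin d → ℝ) : star x = x := funext fun _ => rfl

lemma mat_posDef {d : ℕ} (b : QIdx d → ℝ)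
    (hpos : ∀ x : Fin d → ℝ, x ≠ 0 → 0 < qform b x) : (mat b).PosDef := by
  refine Matrix.PosDef.of_dotProduct_mulVec_pos ?_ ?_
  · show (mat b)ᴴ = mat b
    rw [show (mat b)ᴴ = (mat b)ᵀ from by ext i j; simp [Matrix.conjTranspose_apply], mat_symm]
  · intro x hx
    rw [star_vec_eq, mat_quadform]
    exact hpos x hx

lemma ellipsoid_of_qform_pos {d : ℕ} (b : QIdx d → ℝ)
    (hpos : ∀ x : Fin d → ℝ, x ≠ 0 → 0 < qform b x) :
    IsEllipsoid {x | pform b x - 1 < 0} := by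
  classical
  set A := mat b with hA
  have hPD : A.PosDef := mat_posDef b hpos
  set v : Fin d → ℝ := fun i => b (Sum.inr (Sum.inr i)) with hv
  set μ : Fin d → ℝ := (-(1/2) : ℝ) • (A⁻¹ *ᵥ v) with hμ
  have hAinv : A *ᵥ (A⁻¹ *ᵥ v) = v := by
    rw [Matrix.mulVec_mulVec, Matrix.mul_nonsing_inv _ hPD.det_pos.ne'.isUnit, Matrix.one_mulVec]
  have hAμ : A *ᵥ μ = (-(1/2) : ℝ) • v := by
    rw [hμ, Matrix.mulVec_smul, hAinv]
  set k : ℝ := μ ⬝ᵥ A *ᵥ μ with hk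
  have hk0 : 0 ≤ k := by
    by_cases hμ0 : μ = 0
    · rw [hk, hμ0]; simp
    · exact le_of_lt (by
        have := hPD.dotProduct_mulVec_pos hμ0
        rwa [star_vec_eq] at this)
  have h1k : (0:ℝ) < 1 + k := by linarith
  have hsymmdot : ∀ y z : Fin d → ℝ, y ⬝ᵥ A *ᵥ z = z ⬝ᵥ A *ᵥ y := by
    intro y z
    rw [Matrix.dotProduct_mulVec, ← Matrix.mulVec_transpose, mat_symm, dotProduct_comm]
  have key : ∀ x : Fin d → ℝ, (x - μ) ⬝ᵥ A *ᵥ (x - μ) = pform b x + k := by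
    intro x
    have expand : (x - μ) ⬝ᵥ A *ᵥ (x - μ)
        = x ⬝ᵥ A *ᵥ x - x ⬝ᵥ A *ᵥ μ - μ ⬝ᵥ A *ᵥ x + μ ⬝ᵥ A *ᵥ μ := by
      rw [Matrix.mulVec_sub, sub_dotProduct, dotProduct_sub, dotProduct_sub]
      ring
    have hdot : ∀ y : Fin d → ℝ, y ⬝ᵥ ((-(1/2) : ℝ) • v) = -(1/2) * (y ⬝ᵥ v) := by
      intro y
      rw [dotProduct_smul]
      simp
    have hkval : k = -(1/2) * (μ ⬝ᵥ v) := by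
      rw [hk, hAμ, hdot μ]
    have hpf : pform b x = qform b x + x ⬝ᵥ v := by
      rw [pform]
      congr 1
      rw [dotProduct]
      apply Finset.sum_congr rfl
      intro i _
      rw [hv]
      ring
    rw [expand, hsymmdot μ x, hAμ, hdot x, hdot μ, hA, mat_quadform, hpf, hkval]
    ring
  refine ⟨μ, (1 + k)⁻¹ • A, ?_, ?_⟩
  · refine Matrix.PosDef.of_dotProduct_mulVec_pos ?_ ?_
    · show ((1 + k)⁻¹ • A)ᴴ = (1 + k)⁻¹ • A
      rw [conjTranspose_smul, hPD.1]
      norm_num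
    · intro x hx
      rw [smul_mulVec, dotProduct_smul, smul_eq_mul]
      exact mul_pos (by positivity) (hPD.dotProduct_mulVec_pos hx)
  · ext x
    simp only [Set.mem_setOf_eq]
    rw [smul_mulVec, dotProduct_smul, smul_eq_mul, key x]
    rw [inv_mul_lt_iff₀ h1k, mul_one]
    constructor <;> intro h <;> linarith
end Aux3

/-- There exist a set `S` of `B = (d² + 3d)/2` points on the unit sphere and
`ε > 0` such that `S` is shattered by the class of sets
`{x : p_b(x) - 1 < 0}` over all `b` with `‖b - a‖_∞ < ε` (where `a = aZero d`);
moreover for every such `b` the quadratic form `q_b` is positive definite, and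
every such set is a `d`-dimensional ellipsoid.
(The norm on `QIdx d → ℝ` is the sup norm.) -/
theorem exists_shattered_sphere_points (d : ℕ) (hd : 0 < d) :
    ∃ (S : Finset (Fin d → ℝ)) (ε : ℝ), 0 < ε ∧
      (∀ x ∈ S, ∑ i, x i ^ 2 = 1) ∧
      S.card = (d ^ 2 + 3 * d) / 2 ∧
      Shatters {E : Set (Fin d → ℝ) |
          ∃ b : QIdx d → ℝ, ‖b - aZero d‖ < ε ∧ E = {x | pform b x - 1 < 0}}
        (S : Set (Fin d → ℝ)) ∧
      (∀ b : QIdx d → ℝ, ‖b - aZero d‖ < ε → ∀ x : Fin d → ℝ, x ≠ 0 → 0 < qform b x) ∧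
      (∀ b : QIdx d → ℝ, ‖b - aZero d‖ < ε → IsEllipsoid {x | pform b x - 1 < 0}) := by
  classical
  set ε : ℝ := (2 * ((Fintype.card {p : Fin d × Fin d // p.1 < p.2} : ℝ) + 1))⁻¹ with hε
  have hε0 : 0 < ε := by positivity
  refine ⟨Finset.image pt Finset.univ, ε, hε0, ?_, ?_, ?_, ?_, ?_⟩
  · -- on sphere
    intro x hx
    obtain ⟨k, _, rfl⟩ := Finset.mem_image.mp hx
    exact pt_sphere k
  · -- cardinality
    rw [Finset.card_image_of_injective _ pt_injective, Finset.card_univ]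
    obtain ⟨m, rfl⟩ : ∃ m, d = m + 1 := ⟨d - 1, by omega⟩
    have hcard : Fintype.card (QIdx (m+1)) = (m+1) + ((m+1) * m / 2 + (m+1)) := by
      simp [Fintype.card_sum, card_pairs, Fintype.card_fin]
    obtain ⟨r, hr⟩ := Nat.even_mul_succ_self m
    have hexp : (m+1)^2 + 3*(m+1) = m*(m+1) + 4*(m+1) := by ring
    rw [hcard, hexp, Nat.mul_comm (m+1) m]
    omega
  · -- shattering
    intro Y hY
    set t : QIdx d → ℝ := fun k => if pt k ∈ Y then (-1 : ℝ) else 1 with ht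
    obtain ⟨c, hc⟩ := exists_dual t
    set δ : ℝ := ε / (2 * (‖c‖ + 1)) with hδ
    have hδ0 : 0 < δ := by positivity
    set b : QIdx d → ℝ := aZero d + δ • c with hb
    have hbd : b - aZero d = δ • c := by
      rw [hb]; abel
    have hbnorm : ‖b - aZero d‖ < ε := by
      rw [hbd, norm_smul, Real.norm_eq_abs, abs_of_pos hδ0, hδ]
      have hc1 : 0 < ‖c‖ + 1 := by positivity
      rw [div_mul_eq_mul_div, div_lt_iff₀ (by positivity)]
      nlinarith [norm_nonneg c, hε0]
    have hkey : ∀ k, pform b (pt k) - 1 = δ * t k := by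
      intro k
      rw [pform_eq_dot]
      have hterm : ∀ m, b m * phi (pt k) m
          = aZero d m * phi (pt k) m + δ * (c m * phi (pt k) m) := by
        intro m
        rw [hb]
        simp [Pi.add_apply, Pi.smul_apply]
        ring
      rw [Finset.sum_congr rfl fun m _ => hterm m, Finset.sum_add_distrib,
        ← Finset.mul_sum, hc k, ← pform_eq_dot, pform_aZero, pt_sphere k]
      ring
    refine ⟨{x | pform b x - 1 < 0}, ⟨b, hbnorm, rfl⟩, ?_⟩
    apply Set.Subset.antisymm
    · intro y hy
      have hyS : y ∈ (Finset.image pt Finset.univ : Finset (Fin d → ℝ)) := hY hy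
      refine ⟨hyS, ?_⟩
      obtain ⟨k, _, rfl⟩ := Finset.mem_image.mp hyS
      show pform b (pt k) - 1 < 0
      rw [hkey k, ht]
      simp only [if_pos hy]
      linarith
    · rintro x ⟨hxS, hxE⟩
      have hxS' : x ∈ Finset.image pt Finset.univ := hxS
      obtain ⟨k, _, rfl⟩ := Finset.mem_image.mp hxS'
      have : pform b (pt k) - 1 < 0 := hxE
      rw [hkey k] at this
      by_contra hnot
      rw [ht] at this
      simp only [if_neg hnot] at this
      linarith
  · intro b hb x hx
    exact qform_pos_of_close b hb x hx
  · intro b hb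
    exact ellipsoid_of_qform_pos b (fun x hx => qform_pos_of_close b hb x hx)
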